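/- arXiv:1904.00079 — 2 statements merged into one kernel-verified Lean document; each statement's English description precedes it below -/
import Mathlib

section
/- Assume T is binary. Let u be an internal node with left child ℓ(u) and right child r(u), let R_u ⊆ subtree(u), and let R_ℓ = R_u ∩ subtree(ℓ(u)) and R_r = R_u ∩ subtree(r(u)). Let v ∈ anc(u) ∪ {ε}, where for any set S the convention pB_w(S ∪ {ε}) := pB_w(S) is used. If u ∈ R_u, then pB_u(R_u ∪ {v}) = pB_u({u, v}) + pB_{ℓ(u)}(R_ℓ ∪ {u}) + pB_{r(u)}(R_r ∪ {u}); if u ∉ R_u, then pB_u(R_u ∪ {v}) = pB_{ℓ(u)}(R_ℓ ∪ {v}) + pB_{r(u)}(R_r ∪ {v}). -/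
open scoped Classical

section TreeDefs

variable {V : Type*}

/-- The set of strict ancestors of `u` in the rooted tree given by `parent`. -/
def ancSet (parent : V → V) (u : V) : Set V :=
  {v | v ≠ u ∧ ∃ n : ℕ, parent^[n] u = v}

/-- The set of nodes of the subtree rooted at `u` (including `u`). -/
def subtreeSet (parent : V → V) (u : V) : Set V :=
  {x | ∃ n : ℕ, parent^[n] x = u}

/-- The set of nodes strictly between `u` and its ancestor `v`. -/
def pathSet (parent : V → V) (u v : V) : Set V :=
  {w | w ∈ ancSet parent u ∧ v ∈ ancSet parent w}

/-- A node is internal if it has at least one child. -/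
def isInternal (parent : V → V) (u : V) : Prop :=
  ∃ w, w ≠ u ∧ parent w = u

/-- `T` is binary with left-child map `lc` and right-child map `rc`. -/
def isBinary (parent lc rc : V → V) : Prop :=
  ∀ u, isInternal parent u →
    lc u ≠ rc u ∧ parent (lc u) = u ∧ parent (rc u) = u ∧
    lc u ≠ u ∧ rc u ≠ u ∧
    ∀ w, w ≠ u → parent w = u → w = lc u ∨ w = rc u

/-- The usefulness indicator `I_q(u|R)` of node `u` for a query with
summed-out variables `Zq`, with respect to the materialized set `R`. -/
noncomputable def useful {α : Type*} (parent : V → V) (vars : V → Set α)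
    (Zq : Set α) (u : V) (R : Set V) : ℝ :=
  if vars u ⊆ Zq ∧ ∀ v ∈ ancSet parent u ∩ R, ¬ vars v ⊆ Zq then 1 else 0

/-- The expected usefulness `E[I(u|R)]` over the query distribution. -/
noncomputable def eInd {α Q : Type*} [Fintype Q] (parent : V → V) (vars : V → Set α)
    (Z : Q → Set α) (Pr : Q → ℝ) (u : V) (R : Set V) : ℝ :=
  ∑ q : Q, Pr q * useful parent vars (Z q) u R

/-- The utility `U(u) = Σ_{x ∈ subtree(u)} c(x)`. -/
noncomputable def util [Fintype V] (parent : V → V) (c : V → ℝ) (u : V) : ℝ :=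
  ∑ x ∈ Finset.univ.filter (fun x => x ∈ subtreeSet parent u), c x

/-- The benefit `B(R) = Σ_{u ∈ R} E[I(u|R)] · U(u)`. -/
noncomputable def benefit [Fintype V] {α Q : Type*} [Fintype Q]
    (parent : V → V) (vars : V → Set α) (Z : Q → Set α) (Pr : Q → ℝ)
    (c : V → ℝ) (R : Finset V) : ℝ :=
  ∑ u ∈ R, eInd parent vars Z Pr u (↑R) * util parent c u

/-- The partial benefit `pB_u(R) = Σ_{w ∈ R ∩ subtree(u)} E[I(w|R)] · U(w)`. -/
noncomputable def pB [Fintype V] {α Q : Type*} [Fintype Q]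
    (parent : V → V) (vars : V → Set α) (Z : Q → Set α) (Pr : Q → ℝ)
    (c : V → ℝ) (u : V) (R : Finset V) : ℝ :=
  ∑ w ∈ R.filter (fun w => w ∈ subtreeSet parent u),
    eInd parent vars Z Pr w (↑R) * util parent c w

end TreeDefs


section Helpers

variable {V : Type*} {parent : V → V} {root : V}

lemma root_fix (hroot : parent root = root) (n : ℕ) : parent^[n] root = root := by
  induction n with
  | zero => rfl
  | succ n ih => rw [Function.iterate_succ_apply', ih, hroot]

lemma cycle_root (hroot : parent root = root) (hreach : ∀ u, ∃ n : ℕ, parent^[n] u = root)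
    {x : V} {k : ℕ} (hk : 0 < k) (hx : parent^[k] x = x) : x = root := by
  obtain ⟨m, hm⟩ := hreach x
  have hiter : ∀ j, parent^[k * j] x = x := by
    intro j; induction j with
    | zero => rfl
    | succ j ih =>
      rw [Nat.mul_succ, Function.iterate_add_apply, hx, ih]
  have h1 : parent^[k * (m + 1)] x = x := hiter (m + 1)
  have h2 : m ≤ k * (m + 1) := by nlinarith
  have h3 : parent^[k * (m + 1)] x = parent^[k * (m + 1) - m] (parent^[m] x) := by
    rw [← Function.iterate_add_apply]; congr 1; omega
  rw [hm, root_fix hroot] at h3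
  rw [h3] at h1; exact h1.symm

lemma subtree_antisymm (hroot : parent root = root)
    (hreach : ∀ u, ∃ n : ℕ, parent^[n] u = root) {x y : V}
    (hxy : x ∈ subtreeSet parent y) (hyx : y ∈ subtreeSet parent x) : x = y := by
  obtain ⟨n, hn⟩ := hxy; obtain ⟨m, hm⟩ := hyx
  rcases Nat.eq_zero_or_pos (m + n) with h | h
  · have hn0 : n = 0 := by omega
    rw [hn0] at hn; exact hn
  · have hx : parent^[m + n] x = x := by
      rw [Function.iterate_add_apply, hn, hm]
    have hxr : x = root := cycle_root hroot hreach h hx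
    have hyr : y = root := by rw [← hn, hxr, root_fix hroot]
    rw [hxr, hyr]

lemma subtree_refl (u : V) : u ∈ subtreeSet parent u := ⟨0, rfl⟩

lemma subtree_trans {x w u : V} (h1 : x ∈ subtreeSet parent w)
    (h2 : w ∈ subtreeSet parent u) : x ∈ subtreeSet parent u := by
  obtain ⟨n, hn⟩ := h1; obtain ⟨m, hm⟩ := h2
  exact ⟨m + n, by rw [Function.iterate_add_apply, hn, hm]⟩

lemma child_mem_subtree {w u : V} (h : parent w = u) : w ∈ subtreeSet parent u := ⟨1, h⟩

lemma anc_not_subtree (hroot : parent root = root)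
    (hreach : ∀ u, ∃ n : ℕ, parent^[n] u = root) {v u : V}
    (hv : v ∈ ancSet parent u) : v ∉ subtreeSet parent u := by
  rintro hsub
  obtain ⟨hne, n, hn⟩ := hv
  exact hne (subtree_antisymm hroot hreach hsub ⟨n, hn⟩)

lemma anc_of_subtree (hroot : parent root = root)
    (hreach : ∀ u, ∃ n : ℕ, parent^[n] u = root) {v u w : V}
    (hv : v ∈ ancSet parent u) (hw : w ∈ subtreeSet parent u) : v ∈ ancSet parent w := by
  obtain ⟨hne, k, hk⟩ := hv
  obtain ⟨n, hn⟩ := hw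
  refine ⟨fun h => ?_, k + n, by rw [Function.iterate_add_apply, hn, hk]⟩
  exact anc_not_subtree hroot hreach ⟨hne, k, hk⟩ (h ▸ ⟨n, hn⟩)

lemma subtree_comparable {w x y : V} (hx : w ∈ subtreeSet parent x)
    (hy : w ∈ subtreeSet parent y) :
    x ∈ subtreeSet parent y ∨ y ∈ subtreeSet parent x := by
  obtain ⟨n, hn⟩ := hx; obtain ⟨m, hm⟩ := hy
  rcases le_total n m with h | h
  · left
    exact ⟨m - n, by rw [← hn, ← Function.iterate_add_apply, ← hm]; congr 1; omega⟩
  · right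
    exact ⟨n - m, by rw [← hm, ← Function.iterate_add_apply, ← hn]; congr 1; omega⟩

lemma not_parent_mem_subtree_child (hroot : parent root = root)
    (hreach : ∀ u, ∃ n : ℕ, parent^[n] u = root) {s u : V}
    (hs : parent s = u) (hsne : s ≠ u) : u ∉ subtreeSet parent s := by
  intro h
  exact hsne (subtree_antisymm hroot hreach (child_mem_subtree hs) h)

lemma u_anc_of_subtree_child (hroot : parent root = root)
    (hreach : ∀ u, ∃ n : ℕ, parent^[n] u = root) {s u w : V}
    (hs : parent s = u) (hsne : s ≠ u) (hw : w ∈ subtreeSet parent s) :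
    u ∈ ancSet parent w := by
  obtain ⟨n, hn⟩ := hw
  refine ⟨fun h => ?_, n + 1, by rw [Function.iterate_succ_apply', hn, hs]⟩
  exact not_parent_mem_subtree_child hroot hreach hs hsne (h ▸ ⟨n, hn⟩)

lemma subtree_child_exists {x u : V} (hx : x ∈ subtreeSet parent u) (hxu : x ≠ u) :
    ∃ s, s ≠ u ∧ parent s = u ∧ x ∈ subtreeSet parent s := by
  obtain ⟨n, hn⟩ := hx
  induction n generalizing x with
  | zero => exact absurd hn hxu
  | succ n ih =>
    by_cases hp : parent x = u
    · exact ⟨x, hxu, hp, subtree_refl x⟩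
    · rw [Function.iterate_succ_apply] at hn
      obtain ⟨s, h1, h2, m, h3⟩ := ih hp hn
      exact ⟨s, h1, h2, m + 1, by rw [Function.iterate_succ_apply, h3]⟩

lemma anc_in_subtree (hroot : parent root = root)
    (hreach : ∀ u, ∃ n : ℕ, parent^[n] u = root) {u s w x : V}
    (hs : parent s = u) (hsne : s ≠ u)
    (hw : w ∈ subtreeSet parent s) (hx : x ∈ ancSet parent w)
    (hxu : x ∈ subtreeSet parent u) :
    x = u ∨ x ∈ subtreeSet parent s := by
  obtain ⟨hxw, n, hn⟩ := hx
  rcases subtree_comparable (⟨n, hn⟩ : w ∈ subtreeSet parent x) hw with h | h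
  · exact Or.inr h
  · obtain ⟨k, hk⟩ := h
    rcases Nat.eq_zero_or_pos k with h0 | h0
    · rw [h0] at hk; exact Or.inr (hk ▸ subtree_refl s)
    · left
      have hk' : parent^[k - 1 + 1] s = x := by
        rw [show k - 1 + 1 = k by omega]; exact hk
      rw [Function.iterate_succ_apply, hs] at hk'
      exact subtree_antisymm hroot hreach hxu ⟨k - 1, hk'⟩

lemma useful_congr {α : Type*} (vars : V → Set α) (Zq : Set α) (w : V) {R1 R2 : Set V}
    (h : ∀ x ∈ ancSet parent w, x ∈ R1 ↔ x ∈ R2) :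
    useful parent vars Zq w R1 = useful parent vars Zq w R2 := by
  unfold useful
  congr 1
  apply propext
  constructor <;> rintro ⟨h1, h2⟩
  · exact ⟨h1, fun v hv => h2 v ⟨hv.1, (h v hv.1).mpr hv.2⟩⟩
  · exact ⟨h1, fun v hv => h2 v ⟨hv.1, (h v hv.1).mp hv.2⟩⟩

lemma eInd_congr {α Q : Type*} [Fintype Q] (vars : V → Set α) (Z : Q → Set α)
    (Pr : Q → ℝ) (w : V) {R1 R2 : Set V}
    (h : ∀ x ∈ ancSet parent w, x ∈ R1 ↔ x ∈ R2) :
    eInd parent vars Z Pr w R1 = eInd parent vars Z Pr w R2 := by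
  unfold eInd
  exact Finset.sum_congr rfl fun q _ => by rw [useful_congr vars (Z q) w h]

lemma useful_key {α : Type*} [DecidableEq V]
    (hroot : parent root = root) (hreach : ∀ u, ∃ n : ℕ, parent^[n] u = root)
    (vars : V → Set α) (hvars : ∀ u v : V, v ∈ ancSet parent u → vars u ⊆ vars v)
    (Zq : Set α) {u s w : V} (hs : parent s = u) (hsne : s ≠ u)
    (hw : w ∈ subtreeSet parent s)
    {Ru : Finset V} (hRu : (↑Ru : Set V) ⊆ subtreeSet parent u) (huR : u ∈ Ru)
    {vo : Option V} (hvo : ∀ v ∈ vo, v ∈ ancSet parent u) :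
    useful parent vars Zq w ↑(Ru ∪ vo.toFinset) =
      useful parent vars Zq w ↑(insert u (Ru.filter (fun x => x ∈ subtreeSet parent s))) := by
  have huanc : u ∈ ancSet parent w := u_anc_of_subtree_child hroot hreach hs hsne hw
  unfold useful
  congr 1
  apply propext
  constructor <;> rintro ⟨h1, h2⟩ <;> refine ⟨h1, ?_⟩
  · rintro x ⟨hxa, hxm⟩
    simp only [Finset.coe_insert, Set.mem_insert_iff, Finset.mem_coe,
      Finset.mem_filter] at hxm
    apply h2 x
    refine ⟨hxa, ?_⟩
    simp only [Finset.coe_union, Set.mem_union, Finset.mem_coe, Option.mem_toFinset,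
      Option.coe_def]
    rcases hxm with rfl | ⟨hx, _⟩
    · exact Or.inl huR
    · exact Or.inl hx
  · rintro x ⟨hxa, hxm⟩
    simp only [Finset.coe_union, Set.mem_union, Finset.mem_coe,
      Option.mem_toFinset] at hxm
    rcases hxm with hx | hx
    · rcases anc_in_subtree hroot hreach hs hsne hw hxa (hRu hx) with rfl | hxs
      · exact h2 x ⟨hxa, by simp⟩
      · exact h2 x ⟨hxa, by
          simp only [Finset.coe_insert, Set.mem_insert_iff, Finset.mem_coe,
            Finset.mem_filter]
          exact Or.inr ⟨hx, hxs⟩⟩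
    · have hu2 := h2 u ⟨huanc, by simp⟩
      intro hxz
      exact hu2 ((hvars u x (hvo x hx)).trans hxz)

lemma eInd_key {α Q : Type*} [Fintype Q] [DecidableEq V]
    (hroot : parent root = root) (hreach : ∀ u, ∃ n : ℕ, parent^[n] u = root)
    (vars : V → Set α) (hvars : ∀ u v : V, v ∈ ancSet parent u → vars u ⊆ vars v)
    (Z : Q → Set α) (Pr : Q → ℝ) {u s w : V} (hs : parent s = u) (hsne : s ≠ u)
    (hw : w ∈ subtreeSet parent s)
    {Ru : Finset V} (hRu : (↑Ru : Set V) ⊆ subtreeSet parent u) (huR : u ∈ Ru)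
    {vo : Option V} (hvo : ∀ v ∈ vo, v ∈ ancSet parent u) :
    eInd parent vars Z Pr w ↑(Ru ∪ vo.toFinset) =
      eInd parent vars Z Pr w ↑(insert u (Ru.filter (fun x => x ∈ subtreeSet parent s))) := by
  unfold eInd
  exact Finset.sum_congr rfl fun q _ => by
    rw [useful_key hroot hreach vars hvars (Z q) hs hsne hw hRu huR hvo]

lemma child_not_in_other_subtree (hroot : parent root = root)
    (hreach : ∀ u, ∃ n : ℕ, parent^[n] u = root) {s t u : V}
    (hs : parent s = u) (ht : parent t = u) (htne : t ≠ u) (hst : s ≠ t) :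
    s ∉ subtreeSet parent t := by
  rintro ⟨k, hk⟩
  rcases Nat.eq_zero_or_pos k with h0 | h0
  · rw [h0] at hk; exact hst hk
  · have hk' : parent^[k - 1 + 1] s = t := by
      rw [show k - 1 + 1 = k by omega]; exact hk
    rw [Function.iterate_succ_apply, hs] at hk'
    exact not_parent_mem_subtree_child hroot hreach ht htne ⟨k - 1, hk'⟩

end Helpers

/-- Additivity: in a binary elimination tree, for an internal node
`u` with children `lc u`, `rc u`, a set `R_u ⊆ subtree(u)`, its restrictions
`R_ℓ`, `R_r` to the children's subtrees, and `v ∈ anc(u) ∪ {ε}` (the option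
`vo`, where `ε = none` stands for no ancestor and `pB_w(S ∪ {ε}) := pB_w(S)`):
if `u ∈ R_u` then
`pB_u(R_u ∪ {v}) = pB_u({u,v}) + pB_{ℓ(u)}(R_ℓ ∪ {u}) + pB_{r(u)}(R_r ∪ {u})`,
and if `u ∉ R_u` then
`pB_u(R_u ∪ {v}) = pB_{ℓ(u)}(R_ℓ ∪ {v}) + pB_{r(u)}(R_r ∪ {v})`. -/
theorem partial_benefit_additivity {V α Q : Type*} [Fintype V] [DecidableEq V] [Fintype Q]
    (root : V) (parent : V → V)
    (hroot : parent root = root)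
    (hreach : ∀ u, ∃ n : ℕ, parent^[n] u = root)
    (lc rc : V → V) (hbin : isBinary parent lc rc)
    (vars : V → Set α)
    (hvars : ∀ u v : V, v ∈ ancSet parent u → vars u ⊆ vars v)
    (Z : Q → Set α) (Pr : Q → ℝ)
    (hPr0 : ∀ q, 0 ≤ Pr q) (hPr1 : ∑ q : Q, Pr q = 1)
    (c : V → ℝ) (hc : ∀ x, 0 ≤ c x)
    (u : V) (hu : isInternal parent u)
    (Ru : Finset V) (hRu : (↑Ru : Set V) ⊆ subtreeSet parent u)
    (vo : Option V) (hvo : ∀ v ∈ vo, v ∈ ancSet parent u) :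
    (u ∈ Ru →
      pB parent vars Z Pr c u (Ru ∪ vo.toFinset) =
        pB parent vars Z Pr c u (insert u vo.toFinset) +
        pB parent vars Z Pr c (lc u)
          (insert u (Ru.filter (fun w => w ∈ subtreeSet parent (lc u)))) +
        pB parent vars Z Pr c (rc u)
          (insert u (Ru.filter (fun w => w ∈ subtreeSet parent (rc u))))) ∧
    (u ∉ Ru →
      pB parent vars Z Pr c u (Ru ∪ vo.toFinset) =
        pB parent vars Z Pr c (lc u)
          ((Ru.filter (fun w => w ∈ subtreeSet parent (lc u))) ∪ vo.toFinset) +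
        pB parent vars Z Pr c (rc u)
          ((Ru.filter (fun w => w ∈ subtreeSet parent (rc u))) ∪ vo.toFinset)) := by
  classical
  obtain ⟨hne, hpl, hpr, hlne, hrne, hclass⟩ := hbin u hu
  set Rl := Ru.filter (fun w => w ∈ subtreeSet parent (lc u)) with hRl
  set Rr := Ru.filter (fun w => w ∈ subtreeSet parent (rc u)) with hRr
  have hvns : ∀ v ∈ vo, v ∉ subtreeSet parent u := fun v hv =>
    anc_not_subtree hroot hreach (hvo v hv)
  have hunotl : u ∉ subtreeSet parent (lc u) :=
    not_parent_mem_subtree_child hroot hreach hpl hlne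
  have hunotr : u ∉ subtreeSet parent (rc u) :=
    not_parent_mem_subtree_child hroot hreach hpr hrne
  have hfS : (Ru ∪ vo.toFinset).filter (fun w => w ∈ subtreeSet parent u) = Ru := by
    ext x
    simp only [Finset.mem_filter, Finset.mem_union, Option.mem_toFinset]
    constructor
    · rintro ⟨hx | hx, hsub⟩
      · exact hx
      · exact absurd hsub (hvns x hx)
    · intro hx; exact ⟨Or.inl hx, hRu hx⟩
  have hsplit : ∀ x ∈ Ru, x = u ∨ x ∈ Rl ∨ x ∈ Rr := by
    intro x hx
    by_cases hxu : x = u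
    · exact Or.inl hxu
    · obtain ⟨s, hs1, hs2, hs3⟩ := subtree_child_exists (hRu hx) hxu
      rcases hclass s hs1 hs2 with h | h
      · exact Or.inr (Or.inl (Finset.mem_filter.mpr ⟨hx, h ▸ hs3⟩))
      · exact Or.inr (Or.inr (Finset.mem_filter.mpr ⟨hx, h ▸ hs3⟩))
  have hdisjlr : Disjoint Rl Rr := by
    rw [Finset.disjoint_left]
    intro x hx1 hx2
    have h1 : x ∈ subtreeSet parent (lc u) := (Finset.mem_filter.mp hx1).2
    have h2 : x ∈ subtreeSet parent (rc u) := (Finset.mem_filter.mp hx2).2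
    rcases subtree_comparable h1 h2 with h | h
    · exact child_not_in_other_subtree hroot hreach hpl hpr hrne hne h
    · exact child_not_in_other_subtree hroot hreach hpr hpl hlne (Ne.symm hne) h
  have hunotin : u ∉ Rl ∪ Rr := by
    simp only [Finset.mem_union]
    rintro (h | h)
    · exact hunotl (Finset.mem_filter.mp h).2
    · exact hunotr (Finset.mem_filter.mp h).2
  constructor
  · -- case u ∈ Ru
    intro huR
    have he : Ru = insert u (Rl ∪ Rr) := by
      ext x
      simp only [Finset.mem_insert, Finset.mem_union]
      constructor
      · intro hx
        rcases hsplit x hx with h | h | h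
        · exact Or.inl h
        · exact Or.inr (Or.inl h)
        · exact Or.inr (Or.inr h)
      · rintro (rfl | hx | hx)
        · exact huR
        · exact (Finset.mem_filter.mp hx).1
        · exact (Finset.mem_filter.mp hx).1
    have hsum : ∀ f : V → ℝ, ∑ w ∈ Ru, f w = f u + ∑ w ∈ Rl, f w + ∑ w ∈ Rr, f w := by
      intro f
      rw [show ∑ w ∈ Ru, f w = ∑ w ∈ insert u (Rl ∪ Rr), f w from by rw [← he],
        Finset.sum_insert hunotin, Finset.sum_union hdisjlr, add_assoc]
    -- filter facts for RHS
    have hf1 : (insert u vo.toFinset).filter (fun w => w ∈ subtreeSet parent u) = {u} := by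
      ext x
      simp only [Finset.mem_filter, Finset.mem_insert, Finset.mem_singleton,
        Option.mem_toFinset]
      constructor
      · rintro ⟨rfl | hx, hsub⟩
        · rfl
        · exact absurd hsub (hvns x hx)
      · rintro rfl; exact ⟨Or.inl rfl, subtree_refl _⟩
    have hf2 : (insert u Rl).filter (fun w => w ∈ subtreeSet parent (lc u)) = Rl := by
      ext x
      simp only [Finset.mem_filter, Finset.mem_insert]
      constructor
      · rintro ⟨rfl | hx, hsub⟩
        · exact absurd hsub hunotl
        · exact hx
      · intro hx; exact ⟨Or.inr hx, (Finset.mem_filter.mp hx).2⟩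
    have hf3 : (insert u Rr).filter (fun w => w ∈ subtreeSet parent (rc u)) = Rr := by
      ext x
      simp only [Finset.mem_filter, Finset.mem_insert]
      constructor
      · rintro ⟨rfl | hx, hsub⟩
        · exact absurd hsub hunotr
        · exact hx
      · intro hx; exact ⟨Or.inr hx, (Finset.mem_filter.mp hx).2⟩
    unfold pB
    rw [hfS, hf1, hf2, hf3, Finset.sum_singleton,
      hsum (fun w => eInd parent vars Z Pr w ↑(Ru ∪ vo.toFinset) * util parent c w)]
    congr 1
    congr 1
    · -- u term
      congr 1
      apply eInd_congr
      intro x hx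
      have hxnot : x ∉ subtreeSet parent u := anc_not_subtree hroot hreach hx
      simp only [Finset.coe_union, Set.mem_union, Finset.mem_coe, Option.mem_toFinset,
        Finset.coe_insert, Set.mem_insert_iff]
      constructor
      · rintro (hxr | hxv)
        · exact absurd (hRu hxr) hxnot
        · exact Or.inr hxv
      · rintro (rfl | hxv)
        · exact absurd (subtree_refl x) hxnot
        · exact Or.inr hxv
    · -- Rl sum
      apply Finset.sum_congr rfl
      intro w hw
      congr 1
      exact eInd_key hroot hreach vars hvars Z Pr hpl hlne
        (Finset.mem_filter.mp hw).2 hRu huR hvo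
    · -- Rr sum
      apply Finset.sum_congr rfl
      intro w hw
      congr 1
      exact eInd_key hroot hreach vars hvars Z Pr hpr hrne
        (Finset.mem_filter.mp hw).2 hRu huR hvo
  · -- case u ∉ Ru
    intro huR
    have he : Ru = Rl ∪ Rr := by
      ext x
      simp only [Finset.mem_union]
      constructor
      · intro hx
        rcases hsplit x hx with rfl | h | h
        · exact absurd hx huR
        · exact Or.inl h
        · exact Or.inr h
      · rintro (hx | hx)
        · exact (Finset.mem_filter.mp hx).1
        · exact (Finset.mem_filter.mp hx).1
    have hsum : ∀ f : V → ℝ, ∑ w ∈ Ru, f w = ∑ w ∈ Rl, f w + ∑ w ∈ Rr, f w := by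
      intro f
      rw [show ∑ w ∈ Ru, f w = ∑ w ∈ Rl ∪ Rr, f w from by rw [← he],
        Finset.sum_union hdisjlr]
    have hf2 : (Rl ∪ vo.toFinset).filter (fun w => w ∈ subtreeSet parent (lc u)) = Rl := by
      ext x
      simp only [Finset.mem_filter, Finset.mem_union, Option.mem_toFinset]
      constructor
      · rintro ⟨hx | hx, hsub⟩
        · exact hx
        · exact absurd (subtree_trans hsub (child_mem_subtree hpl)) (hvns x hx)
      · intro hx; exact ⟨Or.inl hx, (Finset.mem_filter.mp hx).2⟩
    have hf3 : (Rr ∪ vo.toFinset).filter (fun w => w ∈ subtreeSet parent (rc u)) = Rr := by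
      ext x
      simp only [Finset.mem_filter, Finset.mem_union, Option.mem_toFinset]
      constructor
      · rintro ⟨hx | hx, hsub⟩
        · exact hx
        · exact absurd (subtree_trans hsub (child_mem_subtree hpr)) (hvns x hx)
      · intro hx; exact ⟨Or.inl hx, (Finset.mem_filter.mp hx).2⟩
    have hmemiff : ∀ (s : V) (Rs : Finset V), parent s = u → s ≠ u →
        (Rs = Ru.filter (fun w => w ∈ subtreeSet parent s)) →
        ∀ w ∈ Rs, ∀ x ∈ ancSet parent w,
          (x ∈ (↑(Ru ∪ vo.toFinset) : Set V) ↔ x ∈ (↑(Rs ∪ vo.toFinset) : Set V)) := by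
      rintro s Rs hps hpsne rfl w hw x hx
      have hws : w ∈ subtreeSet parent s := (Finset.mem_filter.mp hw).2
      simp only [Finset.coe_union, Set.mem_union, Finset.mem_coe, Option.mem_toFinset,
        Finset.mem_filter]
      constructor
      · rintro (hxr | hxv)
        · rcases anc_in_subtree hroot hreach hps hpsne hws hx (hRu hxr) with rfl | hxs
          · exact absurd hxr huR
          · exact Or.inl ⟨hxr, hxs⟩
        · exact Or.inr hxv
      · rintro (⟨hxr, _⟩ | hxv)
        · exact Or.inl hxr
        · exact Or.inr hxv
    unfold pB
    rw [hfS, hf2, hf3,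
      hsum (fun w => eInd parent vars Z Pr w ↑(Ru ∪ vo.toFinset) * util parent c w)]
    congr 1
    · apply Finset.sum_congr rfl
      intro w hw
      congr 1
      exact eInd_congr vars Z Pr w (hmemiff (lc u) Rl hpl hlne hRl w hw)
    · apply Finset.sum_congr rfl
      intro w hw
      congr 1
      exact eInd_congr vars Z Pr w (hmemiff (rc u) Rr hpr hrne hRr w hw)
end

section
/- The benefit function B : 2^V → ℝ≥0 is submodular: for every R ⊆ S ⊆ V and every u ∈ V \ S, B(R ∪ {u}) − B(R) ≥ B(S ∪ {u}) − B(S). -/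
open scoped Classical

section AuxProof
section Aux
variable {V : Type*} {parent : V → V} {root : V}

lemma iter_root (hroot : parent root = root) : ∀ m, parent^[m] root = root := by
  intro m
  induction m with
  | zero => rfl
  | succ n ih => rw [Function.iterate_succ_apply', ih, hroot]

lemma stick (hroot : parent root = root) {x : V} {k j : ℕ}
    (hk : parent^[k] x = root) (hj : k ≤ j) : parent^[j] x = root := by
  obtain ⟨m, rfl⟩ := Nat.exists_eq_add_of_le hj
  rw [Nat.add_comm, Function.iterate_add_apply, hk, iter_root hroot]

lemma no_cycle (hroot : parent root = root)
    (hreach : ∀ u, ∃ n : ℕ, parent^[n] u = root) {v w : V}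
    (hv : v ∈ ancSet parent w) (hw : w ∈ ancSet parent v) : False := by
  obtain ⟨hvw, a, ha⟩ := hv
  obtain ⟨hwv, b, hb⟩ := hw
  have hper : ∀ t : ℕ, parent^[t * (a + b)] v = v := by
    intro t
    induction t with
    | zero => simp
    | succ n ih =>
      rw [Nat.succ_mul, Function.iterate_add_apply,
        Function.iterate_add_apply, hb, ha, ih]
  have hper' : ∀ t : ℕ, parent^[t * (a + b)] w = w := by
    intro t
    induction t with
    | zero => simp
    | succ n ih =>
      have hstep : parent^[a + b] w = w := by
        rw [Nat.add_comm, Function.iterate_add_apply, ha, hb]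
      rw [Nat.succ_mul, Function.iterate_add_apply, hstep, ih]
  have hab : 0 < a + b := by
    rcases Nat.eq_zero_or_pos (a + b) with h0 | h0
    · obtain ⟨ha0, hb0⟩ := Nat.add_eq_zero.mp h0
      subst ha0
      exact absurd ha.symm hvw
    · exact h0
  obtain ⟨k, hk⟩ := hreach v
  have hvroot : v = root := by
    rw [← hper k]
    exact stick hroot hk (Nat.le_mul_of_pos_right k hab)
  obtain ⟨k', hk'⟩ := hreach w
  have hwroot : w = root := by
    rw [← hper' k']
    exact stick hroot hk' (Nat.le_mul_of_pos_right k' hab)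
  exact hvw (hvroot.trans hwroot.symm)

end Aux



section Key
variable {V : Type*} {parent : V → V} {root : V}

lemma sum_useful {α : Type*} [Fintype V] [DecidableEq V]
    (hroot : parent root = root) (hreach : ∀ u, ∃ n : ℕ, parent^[n] u = root)
    (vars : V → Set α) (Zq : Set α) (x : V) (R : Finset V) :
    ∑ w ∈ R, useful parent vars Zq w (↑R) * (if x ∈ subtreeSet parent w then (1:ℝ) else 0)
      = if ∃ w ∈ R, vars w ⊆ Zq ∧ x ∈ subtreeSet parent w then 1 else 0 := by
  by_cases h : ∃ w ∈ R, vars w ⊆ Zq ∧ x ∈ subtreeSet parent w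
  · rw [if_pos h]
    set F := R.filter (fun w => vars w ⊆ Zq ∧ x ∈ subtreeSet parent w) with hF
    have hFne : F.Nonempty := by
      obtain ⟨w, hw, h1, h2⟩ := h
      exact ⟨w, Finset.mem_filter.mpr ⟨hw, h1, h2⟩⟩
    set f : V → ℕ := fun w => if h : ∃ n : ℕ, parent^[n] x = w then h.choose else 0 with hfdef
    have hf : ∀ w, x ∈ subtreeSet parent w → parent^[f w] x = w := by
      intro w hw
      have hw' : ∃ n : ℕ, parent^[n] x = w := hw
      simp only [hfdef, dif_pos hw']
      exact hw'.choose_spec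
    obtain ⟨w', hw'F, hmax⟩ := F.exists_max_image f hFne
    obtain ⟨hw'R, hw'v, hw'x⟩ := Finset.mem_filter.mp hw'F
    -- chain fact: anything in F with index ≤ f w' has w' as weak ancestor
    have hup : ∀ w ∈ F, parent^[f w' - f w] w = w' := by
      intro w hwF
      have hwx : x ∈ subtreeSet parent w := (Finset.mem_filter.mp hwF).2.2
      have hle : f w ≤ f w' := hmax w hwF
      have key : ∀ (m n : ℕ), parent^[n] x = w → parent^[m] x = w' → n ≤ m →
          parent^[m - n] w = w' := by
        intro m n h1 h2 hle'
        rw [← h1, ← Function.iterate_add_apply, Nat.sub_add_cancel hle']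
        exact h2
      exact key _ _ (hf w hwx) (hf w' hw'x) hle
    have htop : ∀ v ∈ F, v ∉ ancSet parent w' := by
      intro v hvF hvanc
      have hneq : v ≠ w' := hvanc.1
      have : w' ∈ ancSet parent v := ⟨hneq.symm, f w' - f v, hup v hvF⟩
      exact no_cycle hroot hreach hvanc this
    rw [Finset.sum_eq_single_of_mem w' hw'R]
    · rw [if_pos hw'x, mul_one]
      unfold useful
      rw [if_pos]
      refine ⟨hw'v, ?_⟩
      intro v hv hvZ
      have hvR : v ∈ R := hv.2
      obtain ⟨hne, k, hk⟩ := hv.1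
      have hvx : x ∈ subtreeSet parent v :=
        ⟨k + f w', by rw [Function.iterate_add_apply, hf w' hw'x, hk]⟩
      exact htop v (Finset.mem_filter.mpr ⟨hvR, hvZ, hvx⟩) hv.1
    · intro w hwR hne
      by_cases hx : x ∈ subtreeSet parent w
      · by_cases hz : vars w ⊆ Zq
        · have hwF : w ∈ F := Finset.mem_filter.mpr ⟨hwR, hz, hx⟩
          have hanc : w' ∈ ancSet parent w := ⟨hne.symm, f w' - f w, hup w hwF⟩
          unfold useful
          rw [if_neg, zero_mul]
          rintro ⟨-, hall⟩
          exact hall w' ⟨hanc, hw'R⟩ hw'v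
        · unfold useful
          rw [if_neg (fun hc => hz hc.1), zero_mul]
      · rw [if_neg hx, mul_zero]
  · rw [if_neg h]
    apply Finset.sum_eq_zero
    intro w hw
    by_cases hx : x ∈ subtreeSet parent w
    · by_cases hv : vars w ⊆ Zq
      · exact absurd ⟨w, hw, hv, hx⟩ h
      · unfold useful
        rw [if_neg (fun hc => hv hc.1), zero_mul]
    · rw [if_neg hx, mul_zero]

end Key







section Ben
variable {V : Type*} {parent : V → V} {root : V}

lemma benefit_eq {α Q : Type*} [Fintype V] [DecidableEq V] [Fintype Q]
    (hroot : parent root = root) (hreach : ∀ u, ∃ n : ℕ, parent^[n] u = root)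
    (vars : V → Set α) (Z : Q → Set α) (Pr : Q → ℝ) (c : V → ℝ) (R : Finset V) :
    benefit parent vars Z Pr c R =
      ∑ q : Q, Pr q * ∑ x : V, c x *
        (if ∃ w ∈ R, vars w ⊆ Z q ∧ x ∈ subtreeSet parent w then (1:ℝ) else 0) := by
  have hutil : ∀ w : V, util parent c w
      = ∑ x : V, c x * (if x ∈ subtreeSet parent w then (1:ℝ) else 0) := by
    intro w
    rw [util, Finset.sum_filter]
    apply Finset.sum_congr rfl
    intro x _
    by_cases h : x ∈ subtreeSet parent w <;> simp [h]
  calc benefit parent vars Z Pr c R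
      = ∑ w ∈ R, ∑ q : Q, ∑ x : V, Pr q * c x *
          (useful parent vars (Z q) w ↑R *
            (if x ∈ subtreeSet parent w then (1:ℝ) else 0)) := by
        apply Finset.sum_congr rfl
        intro w _
        rw [eInd, hutil w, Finset.sum_mul_sum]
        apply Finset.sum_congr rfl; intro q _
        apply Finset.sum_congr rfl; intro x _
        ring
    _ = ∑ q : Q, ∑ x : V, ∑ w ∈ R, Pr q * c x *
          (useful parent vars (Z q) w ↑R *
            (if x ∈ subtreeSet parent w then (1:ℝ) else 0)) := by
        rw [Finset.sum_comm]
        apply Finset.sum_congr rfl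
        intro q _
        rw [Finset.sum_comm]
    _ = ∑ q : Q, Pr q * ∑ x : V, c x *
          (if ∃ w ∈ R, vars w ⊆ Z q ∧ x ∈ subtreeSet parent w then (1:ℝ) else 0) := by
        apply Finset.sum_congr rfl
        intro q _
        rw [Finset.mul_sum]
        apply Finset.sum_congr rfl
        intro x _
        rw [← sum_useful hroot hreach vars (Z q) x R, Finset.mul_sum, Finset.mul_sum]
        apply Finset.sum_congr rfl
        intro w _
        ring

end Ben


end AuxProof

/-- the benefit function is submodular: for every `R ⊆ S ⊆ V`
and `u ∈ V \ S`, `B(R ∪ {u}) − B(R) ≥ B(S ∪ {u}) − B(S)`. -/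
theorem benefit_submodular {V α Q : Type*} [Fintype V] [DecidableEq V] [Fintype Q]
    (root : V) (parent : V → V)
    (hroot : parent root = root)
    (hreach : ∀ u, ∃ n : ℕ, parent^[n] u = root)
    (vars : V → Set α)
    (hvars : ∀ u v : V, v ∈ ancSet parent u → vars u ⊆ vars v)
    (Z : Q → Set α) (Pr : Q → ℝ)
    (hPr0 : ∀ q, 0 ≤ Pr q) (hPr1 : ∑ q : Q, Pr q = 1)
    (c : V → ℝ) (hc : ∀ x, 0 ≤ c x)
    (R S : Finset V) (hRS : R ⊆ S) (u : V) (hu : u ∉ S) :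
    benefit parent vars Z Pr c (insert u S) - benefit parent vars Z Pr c S ≤
      benefit parent vars Z Pr c (insert u R) - benefit parent vars Z Pr c R := by
  rw [benefit_eq hroot hreach vars Z Pr c (insert u S),
    benefit_eq hroot hreach vars Z Pr c S,
    benefit_eq hroot hreach vars Z Pr c (insert u R),
    benefit_eq hroot hreach vars Z Pr c R,
    ← Finset.sum_sub_distrib, ← Finset.sum_sub_distrib]
  apply Finset.sum_le_sum
  intro q _
  rw [← mul_sub, ← mul_sub]
  apply mul_le_mul_of_nonneg_left _ (hPr0 q)
  rw [← Finset.sum_sub_distrib, ← Finset.sum_sub_distrib]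
  apply Finset.sum_le_sum
  intro x _
  rw [← mul_sub, ← mul_sub]
  apply mul_le_mul_of_nonneg_left _ (hc x)
  have hins : ∀ T : Finset V,
      (∃ w ∈ insert u T, vars w ⊆ Z q ∧ x ∈ subtreeSet parent w) ↔
      ((vars u ⊆ Z q ∧ x ∈ subtreeSet parent u) ∨
        ∃ w ∈ T, vars w ⊆ Z q ∧ x ∈ subtreeSet parent w) := by
    intro T
    constructor
    · rintro ⟨w, hw, hp⟩
      rcases Finset.mem_insert.mp hw with rfl | hwT
      · exact Or.inl hp
      · exact Or.inr ⟨w, hwT, hp⟩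
    · rintro (hp | ⟨w, hwT, hp⟩)
      · exact ⟨u, Finset.mem_insert_self u T, hp⟩
      · exact ⟨w, Finset.mem_insert_of_mem hwT, hp⟩
  by_cases hpu : vars u ⊆ Z q ∧ x ∈ subtreeSet parent u
  · by_cases ha : ∃ w ∈ R, vars w ⊆ Z q ∧ x ∈ subtreeSet parent w
    · have hb : ∃ w ∈ S, vars w ⊆ Z q ∧ x ∈ subtreeSet parent w := by
        obtain ⟨w, hw, hp⟩ := ha
        exact ⟨w, hRS hw, hp⟩
      rw [if_pos ((hins S).mpr (Or.inl hpu)), if_pos hb,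
        if_pos ((hins R).mpr (Or.inl hpu)), if_pos ha]
    · rw [if_pos ((hins S).mpr (Or.inl hpu)), if_pos ((hins R).mpr (Or.inl hpu)),
        if_neg ha]
      by_cases hb : ∃ w ∈ S, vars w ⊆ Z q ∧ x ∈ subtreeSet parent w
      · rw [if_pos hb]; norm_num
      · rw [if_neg hb]
  · by_cases hb : ∃ w ∈ S, vars w ⊆ Z q ∧ x ∈ subtreeSet parent w
    · have hbR : ∀ h : (∃ w ∈ R, vars w ⊆ Z q ∧ x ∈ subtreeSet parent w), True :=
        fun _ => trivial
      rw [if_pos ((hins S).mpr (Or.inr hb)), if_pos hb, sub_self]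
      by_cases ha : ∃ w ∈ R, vars w ⊆ Z q ∧ x ∈ subtreeSet parent w
      · rw [if_pos ((hins R).mpr (Or.inr ha)), if_pos ha, sub_self]
      · rw [if_neg ha, if_neg (fun h => ((hins R).mp h).elim hpu ha), sub_self]
    · have ha : ¬ ∃ w ∈ R, vars w ⊆ Z q ∧ x ∈ subtreeSet parent w := by
        intro ⟨w, hw, hp⟩
        exact hb ⟨w, hRS hw, hp⟩
      rw [if_neg ha, if_neg hb,
        if_neg (fun h => ((hins R).mp h).elim hpu ha),
        if_neg (fun h => ((hins S).mp h).elim hpu hb)]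
end
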